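/- The knot quandle of the trefoil knot is isomorphic to the Dehn quandle D(σ_1^{B_3}) of the conjugacy class of the generator σ_1 in the braid group B_3 = ⟨σ_1, σ_2 | σ_1σ_2σ_1 = σ_2σ_1σ_2⟩; moreover the restriction to this conjugacy class of the natural quotient B_3 → M_1 = ⟨a, b | aba = bab, (ab)^6 = 1⟩ (sending σ_1 ↦ a, σ_2 ↦ b) is an isomorphism of quandles D(σ_1^{B_3}) ≅ D(a^{M_1}). In particular, if x, y ∈ B_3 and x σ_1 x^{-1}, y σ_1 y^{-1} have equal images in M_1, then x σ_1 x^{-1} = y σ_1 y^{-1}. -/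
import Mathlib

/-- The braid relation of the braid group `B₃ = ⟨σ₁, σ₂ | σ₁σ₂σ₁ = σ₂σ₁σ₂⟩`. -/
def braidRel : Set (FreeGroup (Fin 2)) :=
  {FreeGroup.of 0 * FreeGroup.of 1 * FreeGroup.of 0 *
    (FreeGroup.of 1 * FreeGroup.of 0 * FreeGroup.of 1)⁻¹}

/-- The braid group `B₃`. -/
abbrev B3 : Type := PresentedGroup braidRel

/-- The mapping class group of the torus `M₁ = ⟨a, b | aba = bab, (ab)⁶ = 1⟩`. -/
abbrev M1 : Type :=
  PresentedGroup (braidRel ∪ {(FreeGroup.of 0 * FreeGroup.of 1) ^ 6})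

namespace TrefoilAux

abbrev F := FreeGroup (Fin 2)
abbrev rels2 : Set F := braidRel ∪ {(FreeGroup.of 0 * FreeGroup.of 1) ^ 6}

lemma N1_le_N2 : Subgroup.normalClosure braidRel ≤ Subgroup.normalClosure rels2 :=
  Subgroup.normalClosure_mono Set.subset_union_left

/-- the projection -/
def π : B3 →* M1 :=
  QuotientGroup.map _ _ (MonoidHom.id F) N1_le_N2

lemma π_mk (f : F) : π (PresentedGroup.mk braidRel f) = PresentedGroup.mk rels2 f := rfl

lemma π_of (i : Fin 2) : π (PresentedGroup.of i) = PresentedGroup.of i := rfl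

-- names for generators in B3
noncomputable abbrev a : B3 := PresentedGroup.of 0
noncomputable abbrev b : B3 := PresentedGroup.of 1

lemma braid_holds : a * b * a = b * a * b := by
  have h : (PresentedGroup.mk braidRel)
      (FreeGroup.of 0 * FreeGroup.of 1 * FreeGroup.of 0 *
        (FreeGroup.of 1 * FreeGroup.of 0 * FreeGroup.of 1)⁻¹) = 1 :=
    (QuotientGroup.eq_one_iff _).mpr (Subgroup.subset_normalClosure rfl)
  have h2 : a * b * a * (b * a * b)⁻¹ = 1 := by
    simpa [a, b, PresentedGroup.of, map_mul, map_inv] using h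
  exact mul_inv_eq_one.mp h2

noncomputable abbrev z : B3 := (a * b) ^ 6

lemma z_eq : z = (a * b * a) ^ 4 := by
  have h := braid_holds
  have h3 : (a * b) ^ 3 = (a * b * a) ^ 2 := by
    rw [pow_succ, pow_two, pow_two]
    rw [show a * b * (a * b) = a * b * a * b by group]
    rw [show a * b * a * b * (a * b) = a * b * a * (b * a * b) by group]
    rw [← h]
  calc z = ((a * b) ^ 3) ^ 2 := by rw [← pow_mul]
    _ = ((a * b * a) ^ 2) ^ 2 := by rw [h3]
    _ = (a * b * a) ^ 4 := by rw [← pow_mul]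

lemma delta_a : (a * b * a) * a = b * (a * b * a) := by
  conv_lhs => rw [braid_holds]
  group

lemma delta_b : (a * b * a) * b = a * (a * b * a) := by
  conv_rhs => rw [braid_holds]
  group

lemma delta_sq_comm_a : Commute ((a * b * a) ^ 2) a := by
  show (a * b * a) ^ 2 * a = a * (a * b * a) ^ 2
  rw [pow_two, mul_assoc, delta_a, ← mul_assoc, delta_b, mul_assoc]

lemma delta_sq_comm_b : Commute ((a * b * a) ^ 2) b := by
  show (a * b * a) ^ 2 * b = b * (a * b * a) ^ 2
  rw [pow_two, mul_assoc, delta_b, ← mul_assoc, delta_a, mul_assoc]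

lemma z_central : ∀ g : B3, Commute z g := by
  intro g
  have hz : z = ((a * b * a) ^ 2) ^ 2 := by rw [z_eq, ← pow_mul]
  have ha : Commute z a := by rw [hz]; exact (delta_sq_comm_a).pow_left 2
  have hb : Commute z b := by rw [hz]; exact (delta_sq_comm_b).pow_left 2
  have hmem : g ∈ Subgroup.centralizer {z} := by
    refine PresentedGroup.generated_by braidRel (Subgroup.centralizer {z}) ?_ g
    intro j
    fin_cases j
    · exact Subgroup.mem_centralizer_iff.mpr (by rintro y rfl; exact ha.eq)
    · exact Subgroup.mem_centralizer_iff.mpr (by rintro y rfl; exact hb.eq)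
  exact Subgroup.mem_centralizer_iff.mp hmem z rfl

lemma zpowers_z_normal : (Subgroup.zpowers z).Normal := by
  constructor
  intro n hn g
  obtain ⟨k, rfl⟩ := Subgroup.mem_zpowers_iff.mp hn
  have hcomm : Commute (z ^ k) g := (z_central g).zpow_left k
  rw [show g * z ^ k * g⁻¹ = z ^ k from by rw [← hcomm.eq]; group]
  exact Subgroup.zpow_mem _ (Subgroup.mem_zpowers z) k

lemma ker_sub : ∀ c : B3, π c = 1 → c ∈ Subgroup.zpowers z := by
  intro c hc
  obtain ⟨f, rfl⟩ := PresentedGroup.mk_surjective braidRel c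
  have hf : f ∈ Subgroup.normalClosure rels2 := (QuotientGroup.eq_one_iff f).mp hc
  have hnorm : (Subgroup.comap (PresentedGroup.mk braidRel) (Subgroup.zpowers z)).Normal :=
    Subgroup.Normal.comap zpowers_z_normal _
  have hle : Subgroup.normalClosure rels2 ≤
      Subgroup.comap (PresentedGroup.mk braidRel) (Subgroup.zpowers z) := by
    apply Subgroup.normalClosure_le_normal
    rintro r (hr | hr)
    · have h1 : (PresentedGroup.mk braidRel) r = 1 :=
        (QuotientGroup.eq_one_iff r).mpr (Subgroup.subset_normalClosure hr)
      show r ∈ Subgroup.comap (PresentedGroup.mk braidRel) (Subgroup.zpowers z)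
      rw [Subgroup.mem_comap, h1]
      exact one_mem _
    · rw [Set.mem_singleton_iff] at hr
      subst hr
      have h1 : (PresentedGroup.mk braidRel) ((FreeGroup.of 0 * FreeGroup.of 1) ^ 6) = z := by
        simp [z, a, b, PresentedGroup.of, map_mul, map_pow]
      show _ ∈ Subgroup.comap (PresentedGroup.mk braidRel) (Subgroup.zpowers z)
      rw [Subgroup.mem_comap, h1]
      exact Subgroup.mem_zpowers z
  exact hle hf

/-- exponent-sum homomorphism -/
noncomputable def e : B3 →* Multiplicative ℤ := by
  refine QuotientGroup.lift _ (FreeGroup.lift fun _ => Multiplicative.ofAdd (1 : ℤ)) ?_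
  apply Subgroup.normalClosure_le_normal
  intro r hr
  simp only [braidRel, Set.mem_singleton_iff] at hr
  subst hr
  show _ ∈ MonoidHom.ker _
  simp only [MonoidHom.mem_ker, map_mul, map_inv, FreeGroup.lift_apply_of]
  group

lemma e_mk (f : F) : e (PresentedGroup.mk braidRel f) =
    FreeGroup.lift (fun _ => Multiplicative.ofAdd (1 : ℤ)) f := rfl

lemma e_a : e a = Multiplicative.ofAdd (1 : ℤ) := by
  simp [a, PresentedGroup.of, e_mk]

lemma e_z : e z = Multiplicative.ofAdd (12 : ℤ) := by
  have hb : e b = Multiplicative.ofAdd (1 : ℤ) := by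
    simp [b, PresentedGroup.of, e_mk]
  rw [z, map_pow, map_mul, e_a, hb, ← ofAdd_add, ← ofAdd_nsmul]
  norm_num

lemma e_conj (g : B3) : e (g * a * g⁻¹) = Multiplicative.ofAdd (1 : ℤ) := by
  rw [map_mul, map_mul, map_inv, e_a, mul_comm (e g), mul_assoc, mul_inv_cancel, mul_one]

end TrefoilAux

/-- The knot quandle of the trefoil is the Dehn quandle `D(σ₁^{B₃})` (by primality of the
trefoil, whose knot group is `B₃`), and the natural quotient `B₃ → M₁`, `σ₁ ↦ a`,
`σ₂ ↦ b`, restricts to a bijection (hence, being a restriction of a group homomorphism to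
conjugacy classes, a quandle isomorphism) from `D(σ₁^{B₃})` onto the Dehn quandle
`D(a^{M₁})` of the torus. In particular it is injective on the conjugacy class of `σ₁`. -/
theorem trefoil_quandle_iso_dehn_quandle_torus :
    ∃ π : B3 →* M1,
      (∀ i : Fin 2, π (PresentedGroup.of i) = PresentedGroup.of i) ∧
      Set.BijOn π
        {x : B3 | ∃ g : B3, x = g * PresentedGroup.of 0 * g⁻¹}
        {x : M1 | ∃ g : M1, x = g * PresentedGroup.of 0 * g⁻¹} := by
  classical
  refine ⟨TrefoilAux.π, TrefoilAux.π_of, ?_, ?_, ?_⟩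
  · -- MapsTo
    rintro x ⟨g, rfl⟩
    exact ⟨TrefoilAux.π g, by simp [map_mul, map_inv, TrefoilAux.π_of]⟩
  · -- InjOn
    rintro x ⟨g, rfl⟩ y ⟨h, rfl⟩ hxy
    have hker : TrefoilAux.π ((g * TrefoilAux.a * g⁻¹) * (h * TrefoilAux.a * h⁻¹)⁻¹) = 1 := by
      rw [map_mul, map_inv, hxy, mul_inv_cancel]
    obtain ⟨k, hk⟩ := Subgroup.mem_zpowers_iff.mp (TrefoilAux.ker_sub _ hker)
    have h1 : TrefoilAux.e ((g * TrefoilAux.a * g⁻¹) * (h * TrefoilAux.a * h⁻¹)⁻¹) = 1 := by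
      rw [map_mul, map_inv, TrefoilAux.e_conj, TrefoilAux.e_conj, mul_inv_cancel]
    rw [← hk, map_zpow, TrefoilAux.e_z] at h1
    have hk0 : k = 0 := by
      rw [← ofAdd_zsmul, ofAdd_eq_one, smul_eq_mul] at h1
      omega
    have h3 : (g * TrefoilAux.a * g⁻¹) * (h * TrefoilAux.a * h⁻¹)⁻¹ = 1 := by
      rw [← hk, hk0, zpow_zero]
    exact mul_inv_eq_one.mp h3
  · -- SurjOn
    rintro y ⟨g, rfl⟩
    obtain ⟨f, rfl⟩ := PresentedGroup.mk_surjective _ g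
    refine ⟨PresentedGroup.mk braidRel f * TrefoilAux.a * (PresentedGroup.mk braidRel f)⁻¹,
      ⟨PresentedGroup.mk braidRel f, rfl⟩, ?_⟩
    simp only [map_mul, map_inv]
    rw [TrefoilAux.π_mk]
    rfl
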